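/- For any real θ > 0 and positive integer n, θ{log(1+n/θ) - 5/3 + 3θ/(n+θ) - 2θ²/(n+θ)² + 2θ³/(3(n+θ)³)} + n/(2(n+θ)) - 5 ≤ ∑_{i=1}^n p_i(1-p_i)(p_i² + (1-p_i)²) ≤ θ{log(1+n/θ) - 5/3 + 3θ/(n+θ) - 2θ²/(n+θ)² + 2θ³/(3(n+θ)³)} + 4 + n/(n+θ), where p_i = θ/(θ+i-1). -/

import Mathlib

open Real Finset

lemma log_lb (u : ℝ) (hu : 0 < u) : 1/(u+1) ≤ Real.log (u+1) - Real.log u := by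
  have hv : 0 < u + 1 := by linarith
  have h := Real.log_le_sub_one_of_pos (show (0:ℝ) < u/(u+1) by positivity)
  rw [Real.log_div hu.ne' hv.ne'] at h
  have e : u/(u+1) - 1 = -(1/(u+1)) := by field_simp; ring
  linarith [e ▸ h]

lemma log_ub (u : ℝ) (hu : 0 < u) : Real.log (u+1) - Real.log u ≤ (2*u+1)/(2*u*(u+1)) := by
  have hv : 0 < u + 1 := by linarith
  have hy : (1:ℝ) < (u+1)/u := by rw [lt_div_iff₀ hu]; linarith
  have h0 : (0:ℝ) < (u+1)/u := by positivity
  have h1 : Real.log ((u+1)/u) < Real.sinh (Real.log ((u+1)/u)) :=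
    Real.self_lt_sinh_iff.mpr (Real.log_pos hy)
  rw [Real.sinh_log h0, Real.log_div hv.ne' hu.ne'] at h1
  have e : ((u+1)/u - ((u+1)/u)⁻¹)/2 = (2*u+1)/(2*u*(u+1)) := by
    rw [inv_div]; field_simp; ring
  linarith [e ▸ h1]

noncomputable def Pf (θ : ℝ) (x : ℝ) : ℝ :=
  θ * Real.log x + 3*θ^2/x - 2*θ^3/x^2 + 2/3*θ^4/x^3 - θ/(2*x) + 3*θ^2/x^2 + 2*θ^4/x^4

noncomputable def Qf (θ : ℝ) (x : ℝ) : ℝ :=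
  θ * Real.log x + 3*θ^2/x - 2*θ^3/x^2 + 2/3*θ^4/x^3 - θ/x - 4*θ^3/x^3

lemma termL (θ u : ℝ) (hθ : 0 < θ) (hu : θ ≤ u) :
    Pf θ (u+1) - Pf θ u ≤ θ/u * (1 - θ/u) * ((θ/u)^2 + (1-θ/u)^2) := by
  have hu0 : 0 < u := hθ.trans_le hu
  have hv : 0 < u + 1 := by linarith
  have hlog := log_ub u hu0
  have h1 : θ * Real.log (u+1) - θ * Real.log u ≤ θ * ((2*u+1)/(2*u*(u+1))) := by
    have h := mul_le_mul_of_nonneg_left hlog hθ.le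
    rw [mul_sub] at h; linarith
  have e : θ/u * (1 - θ/u) * ((θ/u)^2 + (1-θ/u)^2)
      - (θ * ((2*u+1)/(2*u*(u+1)))
        + (3*θ^2/(u+1) - 2*θ^3/(u+1)^2 + 2/3*θ^4/(u+1)^3 - θ/(2*(u+1)) + 3*θ^2/(u+1)^2 + 2*θ^4/(u+1)^4)
        - (3*θ^2/u - 2*θ^3/u^2 + 2/3*θ^4/u^3 - θ/(2*u) + 3*θ^2/u^2 + 2*θ^4/u^4))
      = 3*θ^2/(u*(u+1)^2) + 2*θ^3*(3*u+2)/(u^3*(u+1)^2)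
        + 2/3*θ^4*(6*u^2+4*u+1)/(u^3*(u+1)^4) := by
    field_simp
    ring
  have p1 : 0 ≤ 3*θ^2/(u*(u+1)^2) := by positivity
  have p2 : 0 ≤ 2*θ^3*(3*u+2)/(u^3*(u+1)^2) := by positivity
  have p3 : 0 ≤ 2/3*θ^4*(6*u^2+4*u+1)/(u^3*(u+1)^4) := by positivity
  simp only [Pf]
  linarith

lemma termU (θ u : ℝ) (hθ : 0 < θ) (hu : θ ≤ u) :
    θ/u * (1 - θ/u) * ((θ/u)^2 + (1-θ/u)^2) ≤ Qf θ (u+1) - Qf θ u := by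
  have hu0 : 0 < u := hθ.trans_le hu
  have hv : 0 < u + 1 := by linarith
  have hlog := log_lb u hu0
  have h1 : θ * (1/(u+1)) ≤ θ * Real.log (u+1) - θ * Real.log u := by
    have h := mul_le_mul_of_nonneg_left hlog hθ.le
    rw [mul_sub] at h; linarith
  have e : (θ * (1/(u+1))
        + (3*θ^2/(u+1) - 2*θ^3/(u+1)^2 + 2/3*θ^4/(u+1)^3 - θ/(u+1) - 4*θ^3/(u+1)^3)
        - (3*θ^2/u - 2*θ^3/u^2 + 2/3*θ^4/u^3 - θ/u - 4*θ^3/u^3))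
      - θ/u * (1 - θ/u) * ((θ/u)^2 + (1-θ/u)^2)
      = 3*θ^2/(u^2*(u+1)) + 2*θ^3*(3*u+1)/(u^2*(u+1)^3)
        + 2/3*θ^4*(6*u^2+8*u+3)/(u^4*(u+1)^3) := by
    field_simp
    ring
  have p1 : 0 ≤ 3*θ^2/(u^2*(u+1)) := by positivity
  have p2 : 0 ≤ 2*θ^3*(3*u+1)/(u^2*(u+1)^3) := by positivity
  have p3 : 0 ≤ 2/3*θ^4*(6*u^2+8*u+3)/(u^4*(u+1)^3) := by positivity
  simp only [Qf]
  linarith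

theorem stmt_12 (θ : ℝ) (hθ : 0 < θ) (n : ℕ) (hn : 1 ≤ n) :
    θ * (Real.log (1 + n / θ) - 5 / 3 + 3 * θ / (n + θ) - 2 * θ ^ 2 / (n + θ) ^ 2
        + 2 * θ ^ 3 / (3 * (n + θ) ^ 3)) + n / (2 * (n + θ)) - 5 ≤
      ∑ i ∈ Finset.range n, θ / (θ + i) * (1 - θ / (θ + i))
        * ((θ / (θ + i)) ^ 2 + (1 - θ / (θ + i)) ^ 2) ∧
    ∑ i ∈ Finset.range n, θ / (θ + i) * (1 - θ / (θ + i))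
        * ((θ / (θ + i)) ^ 2 + (1 - θ / (θ + i)) ^ 2) ≤
      θ * (Real.log (1 + n / θ) - 5 / 3 + 3 * θ / (n + θ) - 2 * θ ^ 2 / (n + θ) ^ 2
        + 2 * θ ^ 3 / (3 * (n + θ) ^ 3)) + 4 + n / (n + θ) := by
  have hθle : ∀ i : ℕ, θ ≤ θ + i := fun i => le_add_of_nonneg_right (Nat.cast_nonneg i)
  have hcn : (0:ℝ) < θ + n := by positivity
  have hnθ : (0:ℝ) < (n:ℝ) + θ := by positivity
  have hlogeq : Real.log (1 + (n:ℝ) / θ) = Real.log (θ + n) - Real.log θ := by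
    rw [show (1:ℝ) + (n:ℝ)/θ = (θ + n)/θ by field_simp, Real.log_div hcn.ne' hθ.ne']
  constructor
  · have telL := Finset.sum_range_sub (fun k : ℕ => Pf θ (θ + k)) n
    have hsumL : Pf θ (θ + n) - Pf θ (θ + (0:ℕ)) ≤
        ∑ i ∈ Finset.range n, θ / (θ + i) * (1 - θ / (θ + i))
          * ((θ / (θ + i)) ^ 2 + (1 - θ / (θ + i)) ^ 2) := by
      rw [← telL]
      apply Finset.sum_le_sum
      intro i _
      have h := termL θ (θ + i) hθ (hθle i)
      push_cast
      rw [show θ + ((i:ℝ) + 1) = (θ + (i:ℝ)) + 1 from by ring]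
      exact h
    have h0 : Pf θ (θ + (0:ℕ)) = Pf θ θ := by norm_num
    rw [h0] at hsumL
    have e : Pf θ (θ + n) - Pf θ θ
        - (θ * (Real.log (1 + n / θ) - 5 / 3 + 3 * θ / (n + θ) - 2 * θ ^ 2 / (n + θ) ^ 2
            + 2 * θ ^ 3 / (3 * (n + θ) ^ 3)) + n / (2 * (n + θ)) - 5)
        = 3 * θ^2 / (θ + n)^2 + 2 * θ^4 / (θ + n)^4 := by
      simp only [Pf, hlogeq]
      field_simp
      ring
    have p1 : 0 ≤ 3 * θ^2 / (θ + (n:ℝ))^2 := by positivity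
    have p2 : 0 ≤ 2 * θ^4 / (θ + (n:ℝ))^4 := by positivity
    linarith
  · have telU := Finset.sum_range_sub (fun k : ℕ => Qf θ (θ + k)) n
    have hsumU : ∑ i ∈ Finset.range n, θ / (θ + i) * (1 - θ / (θ + i))
          * ((θ / (θ + i)) ^ 2 + (1 - θ / (θ + i)) ^ 2)
        ≤ Qf θ (θ + n) - Qf θ (θ + (0:ℕ)) := by
      rw [← telU]
      apply Finset.sum_le_sum
      intro i _
      have h := termU θ (θ + i) hθ (hθle i)
      push_cast
      rw [show θ + ((i:ℝ) + 1) = (θ + (i:ℝ)) + 1 from by ring]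
      exact h
    have h0 : Qf θ (θ + (0:ℕ)) = Qf θ θ := by norm_num
    rw [h0] at hsumU
    have e : (θ * (Real.log (1 + n / θ) - 5 / 3 + 3 * θ / (n + θ) - 2 * θ ^ 2 / (n + θ) ^ 2
            + 2 * θ ^ 3 / (3 * (n + θ) ^ 3)) + 4 + n / (n + θ))
        - (Qf θ (θ + n) - Qf θ θ)
        = 4 * θ^3 / (θ + n)^3 := by
      simp only [Qf, hlogeq]
      field_simp
      ring
    have p1 : 0 ≤ 4 * θ^3 / (θ + (n:ℝ))^3 := by positivity
    linarith
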